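/- Let n ≥ 2 and t ≥ 1 be integers. If there exists an n×n integer matrix Y with Y_{ij} ≥ 1 whenever j ≤ i+1, Y_{ij} = 0 whenever j ≥ i+2, and all row and column sums equal to t, then t ≥ ⌈(n+1)/2⌉·⌊(n+1)/2⌋; in particular, for odd n = 2m+1 no such matrix exists when t ≤ (m+1)² − 1, and for even n = 2m no such matrix exists when t ≤ m(m+1) − 1. -/

import Mathlib

/-- `IsInteriorPoint n t Y` says that the `n × n` integer matrix `Y` has
`Y i j ≥ 1` whenever `j ≤ i + 1`, `Y i j = 0` whenever `j ≥ i + 2`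
(`0`-based indices, matching the `1`-based conditions in the paper), and all
row and column sums equal to `t`. -/
def IsInteriorPoint (n t : ℕ) (Y : Matrix (Fin n) (Fin n) ℤ) : Prop :=
  (∀ i j : Fin n, (j : ℕ) ≤ (i : ℕ) + 1 → 1 ≤ Y i j) ∧
  (∀ i j : Fin n, (i : ℕ) + 2 ≤ (j : ℕ) → Y i j = 0) ∧
  (∀ i : Fin n, ∑ j, Y i j = (t : ℤ)) ∧
  (∀ j : Fin n, ∑ i, Y i j = (t : ℤ))

lemma card_filter_lt_fin (n k : ℕ) (hk : k ≤ n) :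
    (Finset.univ.filter (fun j : Fin n => (j : ℕ) < k)).card = k := by
  rw [← Finset.card_range k]
  apply Finset.card_bij (fun (j : Fin n) _ => (j : ℕ))
  · intro a ha
    simp only [Finset.mem_filter, Finset.mem_univ, true_and] at ha
    simpa using ha
  · intro a _ b _ h
    exact Fin.ext h
  · intro b hb
    simp only [Finset.mem_range] at hb
    exact ⟨⟨b, lt_of_lt_of_le hb hk⟩, by simp [hb], rfl⟩

lemma main_bound (n t : ℕ) (hn : 2 ≤ n)
    (h : ∃ Y : Matrix (Fin n) (Fin n) ℤ, IsInteriorPoint n t Y) :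
    (n + 2) / 2 * ((n + 1) / 2) ≤ t := by
  obtain ⟨Y, h1, h2, h3, h4⟩ := h
  set k : ℕ := (n + 2) / 2 with hkdef
  have hk1 : 1 ≤ k := by omega
  have hkn : k ≤ n := by omega
  set J : Finset (Fin n) := Finset.univ.filter (fun j : Fin n => (j : ℕ) < k) with hJ
  have hJcard : J.card = k := card_filter_lt_fin n k hkn
  -- total over first k columns
  have hT : ∑ i, ∑ j ∈ J, Y i j = (k : ℤ) * t := by
    refine (Finset.sum_comm).trans ?_
    rw [Finset.sum_congr rfl (fun j _ => h4 j)]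
    rw [Finset.sum_const, hJcard, nsmul_eq_mul]
  -- split rows
  set P : Fin n → Prop := fun i => (i : ℕ) < k - 1 with hP
  have hsplit : ∑ i, ∑ j ∈ J, Y i j =
      ∑ i ∈ Finset.univ.filter P, ∑ j ∈ J, Y i j
        + ∑ i ∈ Finset.univ.filter (fun i => ¬ P i), ∑ j ∈ J, Y i j :=
    (Finset.sum_filter_add_sum_filter_not _ _ _).symm
  have hPcard : (Finset.univ.filter P).card = k - 1 :=
    card_filter_lt_fin n (k - 1) (by omega)
  have hnotPcard : (Finset.univ.filter (fun i => ¬ P i)).card = n - (k - 1) := by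
    have := Finset.card_filter_add_card_filter_not (s := Finset.univ) (p := P)
    simp only [Finset.card_univ, Fintype.card_fin] at this
    omega
  -- rows with small index sum to t
  have hrow1 : ∑ i ∈ Finset.univ.filter P, ∑ j ∈ J, Y i j
      = ((k : ℤ) - 1) * t := by
    have : ∀ i ∈ Finset.univ.filter P, ∑ j ∈ J, Y i j = (t : ℤ) := by
      intro i hi
      simp only [Finset.mem_filter, hP] at hi
      rw [← h3 i]
      apply Finset.sum_subset (Finset.filter_subset _ _)
      intro j _ hj
      simp only [hJ, Finset.mem_filter, Finset.mem_univ, true_and, not_lt] at hj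
      exact h2 i j (by omega)
    rw [Finset.sum_congr rfl this, Finset.sum_const, hPcard, nsmul_eq_mul]
    push_cast [Nat.cast_sub hk1]
    ring
  -- rows with large index sum to at least k
  have hrow2 : ((n : ℤ) - (k - 1)) * k
      ≤ ∑ i ∈ Finset.univ.filter (fun i => ¬ P i), ∑ j ∈ J, Y i j := by
    have hone : ∀ i ∈ Finset.univ.filter (fun i => ¬ P i),
        (k : ℤ) ≤ ∑ j ∈ J, Y i j := by
      intro i hi
      simp only [Finset.mem_filter, hP, not_lt] at hi
      calc (k : ℤ) = ∑ _j ∈ J, (1 : ℤ) := by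
            rw [Finset.sum_const, hJcard, nsmul_eq_mul, mul_one]
        _ ≤ ∑ j ∈ J, Y i j := by
            apply Finset.sum_le_sum
            intro j hj
            simp only [hJ, Finset.mem_filter, Finset.mem_univ, true_and] at hj
            exact h1 i j (by omega)
    calc ((n : ℤ) - (k - 1)) * k
        = ∑ _i ∈ Finset.univ.filter (fun i => ¬ P i), (k : ℤ) := by
          rw [Finset.sum_const, hnotPcard, nsmul_eq_mul]
          push_cast [Nat.cast_sub (show k - 1 ≤ n by omega), Nat.cast_sub hk1]
          ring
      _ ≤ _ := Finset.sum_le_sum hone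
  have hineq : ((n : ℤ) - k + 1) * k ≤ t := by
    have := hsplit ▸ hT
    nlinarith [hrow1, hrow2]
  have hm : ((n : ℕ) - k + 1) = (n + 1) / 2 := by omega
  have : ((n - k + 1 : ℕ) : ℤ) * k ≤ (t : ℤ) := by
    push_cast [Nat.cast_sub hkn]
    linarith [hineq]
  have hfin : (n - k + 1) * k ≤ t := by exact_mod_cast this
  rw [hm] at hfin
  calc (n + 2) / 2 * ((n + 1) / 2) = (n + 1) / 2 * k := by rw [hkdef, mul_comm]
    _ ≤ t := hfin

theorem interior_point_threshold (n : ℕ) (hn : 2 ≤ n) (t : ℕ) (ht : 1 ≤ t) :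
    ((∃ Y : Matrix (Fin n) (Fin n) ℤ, IsInteriorPoint n t Y) →
      (n + 2) / 2 * ((n + 1) / 2) ≤ t) ∧
    (∀ m : ℕ, n = 2 * m + 1 → t ≤ (m + 1) ^ 2 - 1 →
      ¬ ∃ Y : Matrix (Fin n) (Fin n) ℤ, IsInteriorPoint n t Y) ∧
    (∀ m : ℕ, n = 2 * m → t ≤ m * (m + 1) - 1 →
      ¬ ∃ Y : Matrix (Fin n) (Fin n) ℤ, IsInteriorPoint n t Y) := by
  refine ⟨main_bound n t hn, ?_, ?_⟩
  · intro m hm hle hY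
    have hb := main_bound n t hn hY
    subst hm
    have : (2 * m + 1 + 2) / 2 = m + 1 := by omega
    have h2 : (2 * m + 1 + 1) / 2 = m + 1 := by omega
    rw [this, h2] at hb
    rw [pow_two] at hle
    have hpos : 1 ≤ (m + 1) * (m + 1) := Nat.one_le_iff_ne_zero.2 (by positivity)
    have h3 : t + 1 ≤ (m + 1) * (m + 1) := by
      have := Nat.add_le_add_right hle 1
      rwa [Nat.sub_add_cancel hpos] at this
    linarith
  · intro m hm hle hY
    have hb := main_bound n t hn hY
    subst hm
    have h1 : (2 * m + 2) / 2 = m + 1 := by omega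
    have h2 : (2 * m + 1) / 2 = m := by omega
    rw [h1, h2] at hb
    have hm1 : 1 ≤ m := by omega
    have hpos : 1 ≤ m * (m + 1) := Nat.one_le_iff_ne_zero.2 (by positivity)
    have h3 : t + 1 ≤ m * (m + 1) := by
      have := Nat.add_le_add_right hle 1
      rwa [Nat.sub_add_cancel hpos] at this
    nlinarith
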